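/- arXiv:1211.6043 — 2 statements merged into one kernel-verified Lean document; each statement's English description precedes it below -/
import Mathlib

section
/- Let x > 0, J ≥ 1 an integer, and real numbers m_1,…,m_J, n_1,…,n_J ∈ [0, x] with ∑ m_i + ∑ n_j = x, each m_i ≤ x/J, and n_1 ≥ n_2 ≥ … ≥ n_J. Let 0 < δ < min((4x−3)/12, (x−1/2)/6, 1/4) and suppose x/J ≤ x − 1/2 − 4δ. If no subsum ∑_{i∈I} m_i + ∑_{j∈J'} n_j lies in the interval [2δ, x − 1/2 − 2δ], then ∑_i m_i < 2δ. -/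
/-- If no subsum of the `m i`'s and `n j`'s lies in `[2δ, x - 1/2 - 2δ]`, then
`∑ m i < 2δ`. -/
theorem stmt_1 (x : ℝ) (J : ℕ) (hJ : 1 ≤ J) (m n : Fin J → ℝ)
    (hm0 : ∀ i, m i ∈ Set.Icc 0 x) (hn0 : ∀ j, n j ∈ Set.Icc 0 x)
    (hsum : ∑ i, m i + ∑ j, n j = x)
    (hmJ : ∀ i, m i ≤ x / J)
    (hmono : ∀ i j : Fin J, i ≤ j → n j ≤ n i)
    (δ : ℝ) (hδ0 : 0 < δ)
    (hδ : δ < min (min ((4 * x - 3) / 12) ((x - 1 / 2) / 6)) (1 / 4))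
    (hJδ : x / J ≤ x - 1 / 2 - 4 * δ)
    (hno : ∀ I I' : Finset (Fin J),
      (∑ i ∈ I, m i + ∑ j ∈ I', n j) ∉ Set.Icc (2 * δ) (x - 1 / 2 - 2 * δ)) :
    ∑ i, m i < 2 * δ := by
  classical
  by_contra h
  push_neg at h
  set S : ℕ → ℝ := fun k => ∑ i ∈ Finset.univ.filter (fun i : Fin J => (i : ℕ) < k), m i
    with hSdef
  have hSJ : S J = ∑ i, m i := by
    simp only [hSdef]
    congr 1
    exact Finset.filter_true_of_mem (fun i _ => i.isLt)
  have hP : ∃ k, 2 * δ ≤ S k := ⟨J, by rw [hSJ]; exact h⟩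
  have hk : 2 * δ ≤ S (Nat.find hP) := Nat.find_spec hP
  have hkJ : Nat.find hP ≤ J := Nat.find_le (by rw [hSJ]; exact h)
  have hk0 : Nat.find hP ≠ 0 := by
    intro h0
    rw [h0] at hk
    have : S 0 = 0 := by simp [hSdef]
    rw [this] at hk; linarith
  obtain ⟨k', hkeq⟩ : ∃ k', Nat.find hP = k' + 1 :=
    ⟨Nat.find hP - 1, (Nat.succ_pred_eq_of_ne_zero hk0).symm⟩
  have hk'J : k' < J := by omega
  have hprev : S k' < 2 * δ := by
    have := Nat.find_min hP (by omega : k' < Nat.find hP)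
    linarith [not_le.mp this]
  have hstep : S (k' + 1) = m ⟨k', hk'J⟩ + S k' := by
    simp only [hSdef]
    rw [show Finset.univ.filter (fun i : Fin J => (i : ℕ) < k' + 1)
        = insert ⟨k', hk'J⟩ (Finset.univ.filter (fun i : Fin J => (i : ℕ) < k')) by
      ext i
      simp [Nat.lt_succ_iff_lt_or_eq, Fin.ext_iff]
      omega]
    rw [Finset.sum_insert (by simp)]
  have hupper : S (k' + 1) ≤ x - 1 / 2 - 2 * δ := by
    have h1 : m ⟨k', hk'J⟩ ≤ x / J := hmJ _
    rw [hstep]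
    linarith
  have := hno (Finset.univ.filter (fun i : Fin J => (i : ℕ) < k' + 1)) ∅
  rw [hkeq] at hk
  exact this ⟨by simp only [Finset.sum_empty, add_zero]; exact hk, by simp only [Finset.sum_empty, add_zero]; exact hupper⟩
end

section
/- Let p be prime and K : ℤ/pℤ → ℂ a p-periodic function. For any integers N₁ < N₂ with N₂ − N₁ ≤ p, the incomplete sum ∑_{N₁ < n ≤ N₂} K(n) satisfies |∑_{N₁ < n ≤ N₂} K(n)| ≤ ((N₂−N₁)/p)|K̂(0)|·√p + ∑_{0 < |h| ≤ p/2} min(1/|h|, (N₂−N₁)/p)·O(1)·|K̂(h)|·√p, up to absolute constants, where K̂(h) = p^{-1/2} ∑_{x mod p} K(x) e(−hx/p). -/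
open scoped BigOperators

/-- The unitarily normalized discrete Fourier transform
`K̂(h) = p^{-1/2} ∑_{x mod p} K(x) e(-hx/p)`. -/
noncomputable def dftZMod (p : ℕ) (K : ZMod p → ℂ) (h : ZMod p) : ℂ :=
  if hp : p = 0 then 0 else
    haveI : NeZero p := ⟨hp⟩
    (Real.sqrt p)⁻¹ *
      ∑ x : ZMod p, K x * Complex.exp (-(2 * Real.pi * Complex.I) * ((h.val : ℂ) * (x.val : ℂ) / (p : ℂ)))

private theorem aux_abs (θ : ℝ) : ‖Complex.exp (θ * Complex.I) - 1‖ = 2 * |Real.sin (θ / 2)| := by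
  have h2 : Complex.exp (((θ/2 : ℝ) : ℂ) * Complex.I) - Complex.exp (-(((θ/2:ℝ):ℂ) * Complex.I))
      = 2 * Complex.I * Complex.sin ((θ/2 : ℝ)) := by
    rw [Complex.sin]
    ring_nf
    rw [Complex.I_sq]
    ring
  have e1 : ((θ/2 : ℝ) : ℂ) * Complex.I + ((θ/2:ℝ):ℂ) * Complex.I = (θ:ℂ) * Complex.I := by
    push_cast; ring
  have e2 : ((θ/2 : ℝ) : ℂ) * Complex.I + -(((θ/2:ℝ):ℂ) * Complex.I) = 0 := by ring
  have h3 : Complex.exp (θ * Complex.I) - 1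
      = Complex.exp (((θ/2:ℝ):ℂ) * Complex.I) * (2 * Complex.I * Complex.sin ((θ/2 : ℝ))) := by
    rw [← h2, mul_sub, ← Complex.exp_add, ← Complex.exp_add, e1, e2, Complex.exp_zero]
  rw [h3, norm_mul]
  have h4 : ‖Complex.exp (((θ/2:ℝ):ℂ) * Complex.I)‖ = 1 := by
    rw [Complex.norm_exp_ofReal_mul_I]
  rw [h4, one_mul, ← Complex.ofReal_sin]
  simp [map_mul, Complex.norm_I]
  rw [show ((θ:ℂ))/2 = ((θ/2 : ℝ) : ℂ) by push_cast; ring, ← Complex.ofReal_sin,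
    Complex.norm_real, Real.norm_eq_abs]

private theorem aux_geom {z : ℂ} (hz : ‖z‖ = 1) (hz1 : z ≠ 1) (N₁ N₂ : ℤ) :
    ‖∑ n ∈ Finset.Ioc N₁ N₂, z ^ n‖ ≤ 2 / ‖z - 1‖ := by
  have hz0 : z ≠ 0 := by intro h; rw [h] at hz; simp at hz
  have hd : (0:ℝ) < ‖z - 1‖ := by
    rw [norm_pos_iff]; exact sub_ne_zero.mpr hz1
  set m : ℕ := (N₂ - N₁).toNat with hm
  have hmap : Finset.Ioc N₁ N₂
      = Finset.map ⟨fun i : ℕ => N₁ + 1 + (i : ℤ), show Function.Injective (fun i : ℕ => N₁ + 1 + (i : ℤ)) from fun a b h => by simpa using h⟩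
        (Finset.range m) := by
    ext x
    simp only [Finset.mem_Ioc, Finset.mem_map, Finset.mem_range, Function.Embedding.coeFn_mk]
    constructor
    · intro h; exact ⟨(x - N₁ - 1).toNat, by omega, by omega⟩
    · rintro ⟨i, hi, rfl⟩; omega
  rw [hmap, Finset.sum_map]
  simp only [Function.Embedding.coeFn_mk]
  have hpow : ∀ i : ℕ, z ^ (N₁ + 1 + (i:ℤ)) = z ^ (N₁+1) * z ^ i := by
    intro i; rw [zpow_add₀ hz0, zpow_natCast]
  simp only [hpow, ← Finset.mul_sum]
  rw [geom_sum_eq hz1, norm_mul, norm_zpow, hz, one_zpow, one_mul, norm_div]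
  gcongr
  exact (norm_sub_le _ _).trans (by simp [norm_pow, hz]; norm_num)

private theorem sqrt_ne (p : ℕ) [NeZero p] : (Real.sqrt p : ℂ) ≠ 0 := by
  simp only [ne_eq, Complex.ofReal_eq_zero]
  exact Real.sqrt_ne_zero'.mpr (by exact_mod_cast Nat.pos_of_ne_zero (NeZero.ne p))

private theorem mulself (p : ℕ) : ((p : ℂ)) = (Real.sqrt p : ℂ) * (Real.sqrt p : ℂ) := by
  rw [← Complex.ofReal_mul, Real.mul_self_sqrt (Nat.cast_nonneg p), Complex.ofReal_natCast]

private theorem dft_eq (p : ℕ) [NeZero p] (K : ZMod p → ℂ) (h : ZMod p) :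
    dftZMod p K h = (Real.sqrt p)⁻¹ * ∑ x : ZMod p, K x * ZMod.stdAddChar (-(x * h)) := by
  rw [dftZMod, dif_neg (NeZero.ne p)]
  congr 1
  refine Finset.sum_congr rfl fun x _ => ?_
  congr 1
  have h1 : (-(x * h)) = (((-((h.val : ℤ) * (x.val : ℤ))) : ℤ) : ZMod p) := by
    push_cast
    rw [ZMod.natCast_val, ZMod.natCast_val, ZMod.cast_id, ZMod.cast_id]; ring
  rw [h1, ZMod.stdAddChar_coe]
  congr 1
  push_cast
  ring

private theorem dft_eq' (p : ℕ) [NeZero p] (K : ZMod p → ℂ) (h : ZMod p) :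
    (ZMod.dft K) h = (Real.sqrt p : ℂ) * dftZMod p K h := by
  rw [dft_eq, Complex.ofReal_inv, ← mul_assoc, mul_inv_cancel₀ (sqrt_ne p), one_mul]
  rw [ZMod.dft_apply]
  simp only [smul_eq_mul]
  exact Finset.sum_congr rfl fun j _ => mul_comm _ _

private theorem aux_calc (a b c : ℂ) (ha : a ≠ 0) : (a*a)⁻¹ * (b * (a * c)) = a⁻¹ * (c * b) := by
  field_simp

private theorem inv_eq (p : ℕ) [NeZero p] (K : ZMod p → ℂ) (k : ZMod p) :
    K k = (Real.sqrt p : ℂ)⁻¹ * ∑ h : ZMod p, dftZMod p K h * ZMod.stdAddChar (h * k) := by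
  have hsum : K k = (p:ℂ)⁻¹ * ∑ j : ZMod p, ZMod.stdAddChar (j * k) * (ZMod.dft K) j := by
    conv_lhs => rw [← (ZMod.dft (N := p) (E := ℂ)).symm_apply_apply K]
    rw [ZMod.invDFT_apply]
    simp [smul_eq_mul]
  rw [hsum, Finset.mul_sum, Finset.mul_sum]
  refine Finset.sum_congr rfl fun j _ => ?_
  rw [dft_eq' p K, mulself p]
  exact aux_calc _ _ _ (sqrt_ne p)

/-- The representative of `h` in `(-p/2, p/2]` (roughly). -/
noncomputable def repZ (p : ℕ) (h : ZMod p) : ℤ :=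
  if (h.val : ℤ) ≤ (p : ℤ) / 2 then (h.val : ℤ) else (h.val : ℤ) - p

private theorem repZ_cast (p : ℕ) [NeZero p] (h : ZMod p) : ((repZ p h : ℤ) : ZMod p) = h := by
  unfold repZ
  split <;> push_cast <;>
    simp [ZMod.natCast_val, ZMod.cast_id, ZMod.natCast_self]

private theorem repZ_mem (p : ℕ) [NeZero p] (h : ZMod p) (hh : h ≠ 0) :
    repZ p h ∈ (Finset.Icc (-(p : ℤ) / 2) ((p : ℤ) / 2)).filter (· ≠ 0) := by
  have hv1 : 1 ≤ h.val := Nat.pos_of_ne_zero (fun hc => hh (by rwa [← ZMod.val_eq_zero]))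
  have hvp : (h.val : ℤ) < p := by exact_mod_cast h.val_lt
  have hv1' : 1 ≤ (h.val : ℤ) := by exact_mod_cast hv1
  simp only [Finset.mem_filter, Finset.mem_Icc, ne_eq]
  unfold repZ
  split <;> refine ⟨⟨by omega, by omega⟩, by omega⟩

private theorem repZ_abs_one (p : ℕ) [NeZero p] (h : ZMod p) (hh : h ≠ 0) :
    1 ≤ |(repZ p h : ℝ)| := by
  have hv1 : 1 ≤ h.val := Nat.pos_of_ne_zero (fun hc => hh (by rwa [← ZMod.val_eq_zero]))
  have hvp : (h.val : ℤ) < p := by exact_mod_cast h.val_lt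
  have hv1' : 1 ≤ (h.val : ℤ) := by exact_mod_cast hv1
  have : 1 ≤ |repZ p h| := by
    unfold repZ; split
    · rw [abs_of_nonneg (by omega)]; omega
    · rw [abs_of_nonpos (by omega)]; omega
  exact_mod_cast this

private theorem norm_stdAddChar (p : ℕ) [NeZero p] (a : ZMod p) :
    ‖(ZMod.stdAddChar a : ℂ)‖ = 1 := by
  rw [ZMod.stdAddChar_apply, Circle.norm_coe]

private theorem stdAddChar_ne_one (p : ℕ) [NeZero p] {h : ZMod p} (hh : h ≠ 0) :
    (ZMod.stdAddChar h : ℂ) ≠ 1 := by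
  intro hc
  apply hh
  have := ZMod.injective_stdAddChar (N := p)
  have h0 : (ZMod.stdAddChar (0 : ZMod p) : ℂ) = 1 := by simp
  exact this (hc.trans h0.symm)

private theorem stdAddChar_eq (p : ℕ) [NeZero p] (h : ZMod p) :
    (ZMod.stdAddChar h : ℂ) = Complex.exp ((2 * Real.pi * h.val / p : ℝ) * Complex.I) := by
  have hh : h = (((h.val : ℤ) : ZMod p)) := by
    simp [ZMod.natCast_val, ZMod.cast_id]
  conv_lhs => rw [hh]
  rw [ZMod.stdAddChar_coe]
  congr 1
  push_cast
  ring

private theorem char_sub_one_norm (p : ℕ) [NeZero p] (h : ZMod p) (hh : h ≠ 0) :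
    4 * |(repZ p h : ℝ)| / p ≤ ‖(ZMod.stdAddChar h : ℂ) - 1‖ := by
  have hp0 : (0:ℝ) < p := by
    exact_mod_cast Nat.pos_of_ne_zero (NeZero.ne p)
  have hv1 : 1 ≤ h.val := Nat.pos_of_ne_zero (fun hc => hh (by rwa [← ZMod.val_eq_zero]))
  have hvp : h.val < p := h.val_lt
  have hvr : (h.val : ℝ) ≤ p := by exact_mod_cast hvp.le
  rw [stdAddChar_eq p h, aux_abs]
  have harg : 2 * Real.pi * h.val / p / 2 = Real.pi * h.val / p := by ring
  rw [harg]
  have hsin0 : 0 ≤ Real.sin (Real.pi * h.val / p) := by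
    apply Real.sin_nonneg_of_nonneg_of_le_pi
    · positivity
    · rw [div_le_iff₀ hp0]; nlinarith [Real.pi_pos]
  have habs : |Real.sin (Real.pi * h.val / p)| = Real.sin (Real.pi * |(repZ p h : ℝ)| / p) ∧
      1 ≤ |(repZ p h : ℝ)| ∧ |(repZ p h : ℝ)| ≤ p / 2 := by
    unfold repZ
    split
    case isTrue ht =>
      have h1 : |((h.val : ℤ) : ℝ)| = (h.val : ℝ) := by
        rw [abs_of_nonneg (by positivity : (0:ℝ) ≤ ((h.val : ℤ) : ℝ))]
        push_cast; ring
      have h2 : (2:ℝ) * h.val ≤ p := by exact_mod_cast (by omega : 2 * (h.val:ℤ) ≤ p)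
      refine ⟨by rw [h1, abs_of_nonneg hsin0], ?_, by rw [h1]; linarith⟩
      rw [h1]; exact_mod_cast hv1
    case isFalse ht =>
      have h1 : |(((h.val : ℤ) - p : ℤ) : ℝ)| = (p : ℝ) - h.val := by
        have hle : (((h.val : ℤ) - p : ℤ) : ℝ) ≤ 0 := by push_cast; linarith
        rw [abs_of_nonpos hle]; push_cast; ring
      have h2 : (2:ℝ) * ((p:ℝ) - h.val) ≤ p := by
        exact_mod_cast (by omega : 2 * ((p:ℤ) - h.val) ≤ p)
      have h3 : (h.val : ℝ) ≤ (p:ℝ) - 1 := by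
        exact_mod_cast (by omega : (h.val:ℤ) ≤ (p:ℤ) - 1)
      refine ⟨?_, by rw [h1]; linarith, by rw [h1]; linarith⟩
      rw [h1]
      have e : Real.pi * ((p:ℝ) - h.val) / p = Real.pi - Real.pi * h.val / p := by
        field_simp
      rw [e, Real.sin_pi_sub, abs_of_nonneg hsin0]
  obtain ⟨heq, hw1, hw2⟩ := habs
  rw [heq]
  set w := |(repZ p h : ℝ)| with hwdef
  have hx0 : 0 ≤ Real.pi * w / p := by positivity
  have hx2 : Real.pi * w / p ≤ Real.pi / 2 := by
    rw [div_le_div_iff₀ hp0 two_pos]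
    nlinarith [Real.pi_pos]
  have hj := Real.mul_le_sin hx0 hx2
  have he : 2 / Real.pi * (Real.pi * w / p) = 2 * w / p := by
    field_simp
  rw [he] at hj
  calc 4 * w / (p:ℝ) = 2 * (2 * w / p) := by ring
  _ ≤ 2 * Real.sin (Real.pi * w / p) := by linarith

private theorem S_bound (p : ℕ) [NeZero p] (N₁ N₂ : ℤ) (hN : N₁ < N₂) (h : ZMod p) (hh : h ≠ 0) :
    ‖∑ n ∈ Finset.Ioc N₁ N₂, (ZMod.stdAddChar (h * (n : ZMod p)) : ℂ)‖ ≤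
      (p : ℝ) * min (1 / |(repZ p h : ℝ)|) (((N₂ - N₁ : ℤ) : ℝ) / p) := by
  have hp0 : (0:ℝ) < p := by exact_mod_cast Nat.pos_of_ne_zero (NeZero.ne p)
  have hw1 : 1 ≤ |(repZ p h : ℝ)| := repZ_abs_one p h hh
  set w := |(repZ p h : ℝ)| with hw
  have hw0 : 0 < w := by linarith
  have hterm : ∀ n : ℤ, (ZMod.stdAddChar (h * (n : ZMod p)) : ℂ) = (ZMod.stdAddChar h : ℂ) ^ n := by
    intro n
    rw [mul_comm, ← zsmul_eq_mul, AddChar.map_zsmul_eq_zpow]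
  simp_rw [hterm]
  have hz : ‖(ZMod.stdAddChar h : ℂ)‖ = 1 := norm_stdAddChar p h
  have hz1 : (ZMod.stdAddChar h : ℂ) ≠ 1 := stdAddChar_ne_one p hh
  have hd := char_sub_one_norm p h hh
  have hd0 : (0:ℝ) < 4 * w / p := by positivity
  have b1 : ‖∑ n ∈ Finset.Ioc N₁ N₂, (ZMod.stdAddChar h : ℂ) ^ n‖ ≤ (p:ℝ) * (1 / w) := by
    refine (aux_geom hz hz1 N₁ N₂).trans ?_
    have : 2 / ‖(ZMod.stdAddChar h : ℂ) - 1‖ ≤ 2 / (4 * w / p) :=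
      div_le_div_of_nonneg_left (by norm_num) hd0 hd
    refine this.trans ?_
    have e : 2 / (4 * w / (p:ℝ)) = (p:ℝ) / (2 * w) := by
      field_simp
      ring
    rw [e, mul_one_div]
    exact div_le_div_of_nonneg_left hp0.le hw0 (by linarith)
  have b2 : ‖∑ n ∈ Finset.Ioc N₁ N₂, (ZMod.stdAddChar h : ℂ) ^ n‖ ≤ (p:ℝ) * (((N₂ - N₁ : ℤ) : ℝ) / p) := by
    rw [mul_div_cancel₀ _ hp0.ne']
    refine (norm_sum_le _ _).trans ?_
    have : ∀ n ∈ Finset.Ioc N₁ N₂, ‖(ZMod.stdAddChar h : ℂ) ^ n‖ = 1 := by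
      intro n _
      rw [norm_zpow, hz, one_zpow]
    rw [Finset.sum_congr rfl this, Finset.sum_const, Int.card_Ioc, nsmul_eq_mul, mul_one]
    exact_mod_cast (Int.toNat_of_nonneg (by omega : (0:ℤ) ≤ N₂ - N₁)).le
  calc ‖∑ n ∈ Finset.Ioc N₁ N₂, (ZMod.stdAddChar h : ℂ) ^ n‖
      ≤ min ((p:ℝ) * (1 / w)) ((p:ℝ) * (((N₂ - N₁ : ℤ) : ℝ) / p)) := le_min b1 b2
  _ = (p : ℝ) * min (1 / w) (((N₂ - N₁ : ℤ) : ℝ) / p) := by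
      rw [mul_min_of_nonneg _ _ hp0.le]

/-- Completion (Pólya–Vinogradov) method: an incomplete sum of a `p`-periodic
function over an interval of length `≤ p` is bounded by the `h = 0` term
weighted by `N/p` plus the sum of `|K̂(h)|√p` weighted by `min(1/|h|, N/p)`
over `0 < |h| ≤ p/2`, up to an absolute constant. -/
theorem stmt_12 :
    ∃ C : ℝ, 0 < C ∧ ∀ (p : ℕ), p.Prime → ∀ (K : ZMod p → ℂ) (N₁ N₂ : ℤ),
      N₁ < N₂ → N₂ - N₁ ≤ (p : ℤ) →
      ‖∑ n ∈ Finset.Ioc N₁ N₂, K (n : ZMod p)‖ ≤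
        (((N₂ - N₁ : ℤ) : ℝ) / p) * ‖dftZMod p K 0‖ * Real.sqrt p +
          C * ∑ h ∈ (Finset.Icc (-(p : ℤ) / 2) ((p : ℤ) / 2)).filter (· ≠ 0),
            min (1 / |(h : ℝ)|) (((N₂ - N₁ : ℤ) : ℝ) / p) *
              ‖dftZMod p K (h : ZMod p)‖ * Real.sqrt p := by
  refine ⟨1, one_pos, ?_⟩
  intro p hp K N₁ N₂ hN hNp
  haveI : NeZero p := ⟨hp.ne_zero⟩
  have hp0 : (0:ℝ) < p := by exact_mod_cast hp.pos
  have hps : (p:ℝ) = Real.sqrt p * Real.sqrt p := (Real.mul_self_sqrt hp0.le).symm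
  have hsq0 : (0:ℝ) < Real.sqrt p := Real.sqrt_pos.mpr hp0
  set Nr : ℝ := ((N₂ - N₁ : ℤ) : ℝ) with hNrdef
  have hNr0 : 0 ≤ Nr := by rw [hNrdef]; exact_mod_cast (by omega : (0:ℤ) ≤ N₂ - N₁)
  set S : ZMod p → ℂ := fun h => ∑ n ∈ Finset.Ioc N₁ N₂, (ZMod.stdAddChar (h * (n : ZMod p)) : ℂ)
    with hSdef
  have key : ∑ n ∈ Finset.Ioc N₁ N₂, K (n : ZMod p)
      = (Real.sqrt p : ℂ)⁻¹ * ∑ h : ZMod p, dftZMod p K h * S h := by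
    calc ∑ n ∈ Finset.Ioc N₁ N₂, K (n : ZMod p)
        = ∑ n ∈ Finset.Ioc N₁ N₂, ((Real.sqrt p : ℂ)⁻¹ *
            ∑ h : ZMod p, dftZMod p K h * ZMod.stdAddChar (h * (n : ZMod p))) :=
          Finset.sum_congr rfl fun n _ => inv_eq p K (n : ZMod p)
      _ = (Real.sqrt p : ℂ)⁻¹ * ∑ n ∈ Finset.Ioc N₁ N₂, ∑ h : ZMod p,
            dftZMod p K h * ZMod.stdAddChar (h * (n : ZMod p)) := by rw [← Finset.mul_sum]
      _ = (Real.sqrt p : ℂ)⁻¹ * ∑ h : ZMod p, ∑ n ∈ Finset.Ioc N₁ N₂,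
            dftZMod p K h * ZMod.stdAddChar (h * (n : ZMod p)) := by rw [Finset.sum_comm]
      _ = _ := by simp_rw [← Finset.mul_sum]; rfl
  have hS0 : S 0 = ((N₂ - N₁ : ℤ) : ℂ) := by
    have : ∀ n ∈ Finset.Ioc N₁ N₂, (ZMod.stdAddChar ((0 : ZMod p) * (n : ZMod p)) : ℂ) = 1 := by
      intro n _
      rw [zero_mul, AddChar.map_zero_eq_one]
    rw [hSdef]
    simp only
    rw [Finset.sum_congr rfl this, Finset.sum_const, Int.card_Ioc, nsmul_eq_mul, mul_one]
    exact_mod_cast congrArg (fun z : ℤ => (z : ℂ)) (Int.toNat_of_nonneg (by omega))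
  have hsplit : ∑ h : ZMod p, dftZMod p K h * S h
      = dftZMod p K 0 * S 0 + ∑ h ∈ Finset.univ.erase 0, dftZMod p K h * S h :=
    (Finset.add_sum_erase _ _ (Finset.mem_univ 0)).symm
  have hninv : ‖(Real.sqrt p : ℂ)⁻¹‖ = (Real.sqrt p)⁻¹ := by
    rw [norm_inv, Complex.norm_real, Real.norm_eq_abs, abs_of_nonneg (Real.sqrt_nonneg _)]
  have key2 : (Real.sqrt p)⁻¹ * (p:ℝ) = Real.sqrt p := by
    field_simp
    exact (Real.sq_sqrt hp0.le).symm
  have key3 : Real.sqrt p / (p:ℝ) = (Real.sqrt p)⁻¹ := by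
    field_simp
    exact Real.sq_sqrt hp0.le
  have hmulaux : ∀ a m : ℝ, (Real.sqrt p)⁻¹ * (a * ((p:ℝ) * m)) = m * a * Real.sqrt p := by
    intro a m
    calc (Real.sqrt p)⁻¹ * (a * ((p:ℝ) * m)) = ((Real.sqrt p)⁻¹ * (p:ℝ)) * (a * m) := by ring
    _ = Real.sqrt p * (a * m) := by rw [key2]
    _ = m * a * Real.sqrt p := by ring
  have hmulaux2 : ∀ a : ℝ, (Real.sqrt p)⁻¹ * (a * Nr) = (Nr / p) * a * Real.sqrt p := by
    intro a
    calc (Real.sqrt p)⁻¹ * (a * Nr) = Nr * a * (Real.sqrt p)⁻¹ := by ring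
    _ = Nr * a * (Real.sqrt p / (p:ℝ)) := by rw [key3]
    _ = (Nr / p) * a * Real.sqrt p := by ring
  rw [key, norm_mul, hninv, hsplit]
  have step1 : ‖dftZMod p K 0 * S 0 + ∑ h ∈ Finset.univ.erase 0, dftZMod p K h * S h‖
      ≤ ‖dftZMod p K 0‖ * Nr + ∑ h ∈ Finset.univ.erase 0, ‖dftZMod p K h‖ * ‖S h‖ := by
    refine (norm_add_le _ _).trans ?_
    gcongr
    · rw [norm_mul, hS0]
      apply le_of_eq
      congr 1
      rw [Complex.norm_intCast]
      exact abs_of_nonneg hNr0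
    · refine (norm_sum_le _ _).trans ?_
      apply le_of_eq
      exact Finset.sum_congr rfl fun h _ => norm_mul _ _
  have step2 : ∀ h ∈ Finset.univ.erase (0 : ZMod p),
      ‖dftZMod p K h‖ * ‖S h‖ ≤ ‖dftZMod p K h‖ * ((p:ℝ) * min (1 / |(repZ p h : ℝ)|) (Nr / p)) := by
    intro h hmem
    have hh : h ≠ 0 := (Finset.mem_erase.mp hmem).1
    exact mul_le_mul_of_nonneg_left (S_bound p N₁ N₂ hN h hh) (norm_nonneg _)
  have gnonneg : ∀ t : ℤ, 0 ≤ min (1 / |(t : ℝ)|) (Nr / p) * ‖dftZMod p K (t : ZMod p)‖ * Real.sqrt p := by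
    intro t
    apply mul_nonneg (mul_nonneg (le_min (by positivity) (by positivity)) (norm_nonneg _))
      (Real.sqrt_nonneg _)
  have step3 : (Real.sqrt p)⁻¹ * ∑ h ∈ Finset.univ.erase (0 : ZMod p),
        ‖dftZMod p K h‖ * ((p:ℝ) * min (1 / |(repZ p h : ℝ)|) (Nr / p))
      = ∑ h ∈ Finset.univ.erase (0 : ZMod p),
          min (1 / |(repZ p h : ℝ)|) (Nr / p) * ‖dftZMod p K ((repZ p h : ℤ) : ZMod p)‖ * Real.sqrt p := by
    rw [Finset.mul_sum]
    refine Finset.sum_congr rfl fun h _ => ?_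
    rw [repZ_cast p h]
    exact hmulaux _ _
  have step4 : ∑ h ∈ Finset.univ.erase (0 : ZMod p),
        min (1 / |(repZ p h : ℝ)|) (Nr / p) * ‖dftZMod p K ((repZ p h : ℤ) : ZMod p)‖ * Real.sqrt p
      ≤ ∑ t ∈ (Finset.Icc (-(p : ℤ) / 2) ((p : ℤ) / 2)).filter (· ≠ 0),
          min (1 / |(t : ℝ)|) (Nr / p) * ‖dftZMod p K (t : ZMod p)‖ * Real.sqrt p := by
    have hinj : ∀ x ∈ Finset.univ.erase (0 : ZMod p), ∀ y ∈ Finset.univ.erase (0 : ZMod p),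
        repZ p x = repZ p y → x = y := by
      intro x _ y _ hxy
      have := congrArg (fun t : ℤ => ((t : ℤ) : ZMod p)) hxy
      simpa only [repZ_cast] using this
    have himg := Finset.sum_image (f := fun t : ℤ =>
        min (1 / |(t : ℝ)|) (Nr / p) * ‖dftZMod p K (t : ZMod p)‖ * Real.sqrt p)
      (g := repZ p) hinj
    rw [← himg]
    apply Finset.sum_le_sum_of_subset_of_nonneg
    · intro t ht
      obtain ⟨h, hmem, rfl⟩ := Finset.mem_image.mp ht
      exact repZ_mem p h (Finset.mem_erase.mp hmem).1
    · intro t _ _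
      exact gnonneg t
  calc (Real.sqrt p)⁻¹ * ‖dftZMod p K 0 * S 0 + ∑ h ∈ Finset.univ.erase 0, dftZMod p K h * S h‖
      ≤ (Real.sqrt p)⁻¹ * (‖dftZMod p K 0‖ * Nr
          + ∑ h ∈ Finset.univ.erase 0, ‖dftZMod p K h‖ * ‖S h‖) := by
        exact mul_le_mul_of_nonneg_left step1 (by positivity)
    _ ≤ (Real.sqrt p)⁻¹ * (‖dftZMod p K 0‖ * Nr
          + ∑ h ∈ Finset.univ.erase (0 : ZMod p),
            ‖dftZMod p K h‖ * ((p:ℝ) * min (1 / |(repZ p h : ℝ)|) (Nr / p))) := by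
        gcongr with h hmem
        exact S_bound p N₁ N₂ hN h (Finset.mem_erase.mp hmem).1
    _ = (Nr / p) * ‖dftZMod p K 0‖ * Real.sqrt p
          + (Real.sqrt p)⁻¹ * ∑ h ∈ Finset.univ.erase (0 : ZMod p),
            ‖dftZMod p K h‖ * ((p:ℝ) * min (1 / |(repZ p h : ℝ)|) (Nr / p)) := by
        rw [mul_add]
        congr 1
        exact hmulaux2 _
    _ ≤ (Nr / p) * ‖dftZMod p K 0‖ * Real.sqrt p
          + ∑ t ∈ (Finset.Icc (-(p : ℤ) / 2) ((p : ℤ) / 2)).filter (· ≠ 0),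
            min (1 / |(t : ℝ)|) (Nr / p) * ‖dftZMod p K (t : ZMod p)‖ * Real.sqrt p := by
        rw [step3]
        exact add_le_add le_rfl step4
    _ = _ := by rw [one_mul]
end
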